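/- Let n and d be positive integers, let G be a game graph with n nodes and priorities up to d, let τ be a positional winning strategy for Even in G, and let A be a nondeterministic parity automaton over Σ_{n,d} that has a transition strategy σ winning for the set of all plays in G arising from τ. Then Even has a winning strategy in the synchronized product G×A. -/

import Mathlib

namespace PGSep

/-- Letters of the alphabet `Σ_{n,d}`: triples (source node, priority, target node). -/
abbrev Letter : Type := ℕ × ℕ × ℕ

/-- The priority component of a letter. -/
def prio (e : Letter) : ℕ := e.2.1

/-- Membership in the alphabet `Σ_{n,d} = {1,…,n} × {1,…,d} × {1,…,n}`. -/
def InAlph (n d : ℕ) (e : Letter) : Prop :=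
  1 ≤ e.1 ∧ e.1 ≤ n ∧ 1 ≤ e.2.1 ∧ e.2.1 ≤ d ∧ 1 ≤ e.2.2 ∧ e.2.2 ≤ n

/-- Infinite words over the alphabet. -/
abbrev Word : Type := ℕ → Letter

/-- `p` occurs infinitely often among the values of `f`. -/
def InfOft (f : ℕ → ℕ) (p : ℕ) : Prop := ∀ N, ∃ k, N ≤ k ∧ f k = p

/-- The largest value occurring infinitely often in `f` exists and is even. -/
def MaxInfOftEven (f : ℕ → ℕ) : Prop :=
  ∃ p, Even p ∧ InfOft f p ∧ ∀ q, InfOft f q → q ≤ p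

/-- The largest value occurring infinitely often in `f` exists and is odd. -/
def MaxInfOftOdd (f : ℕ → ℕ) : Prop :=
  ∃ p, Odd p ∧ InfOft f p ∧ ∀ q, InfOft f q → q ≤ p

/-- `LimsupEven_{n,d}`: the largest priority occurring infinitely often is even. -/
def LimsupEven (w : Word) : Prop := MaxInfOftEven fun k => prio (w k)

/-- `LimsupOdd_{n,d}`: the largest priority occurring infinitely often is odd. -/
def LimsupOdd (w : Word) : Prop := MaxInfOftOdd fun k => prio (w k)

/-- An infinite sequence of triples is a path in the edge set `E`. -/
def IsPathSeq {V : Type*} (E : Set (V × ℕ × V)) (w : ℕ → V × ℕ × V) : Prop :=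
  ∀ k, w k ∈ E ∧ (w k).2.2 = (w (k + 1)).1

/-- A game graph with `n` nodes (the set {1,…,n}) and priorities up to `d`. -/
structure GameGraph (n d : ℕ) where
  /-- nodes owned by Even (V_□) -/
  evenN : Set ℕ
  /-- nodes owned by Odd (V_△) -/
  oddN : Set ℕ
  /-- the starting node -/
  start : ℕ
  /-- the set of edges (a subset of the alphabet) -/
  edges : Set Letter
  union_eq : evenN ∪ oddN = Set.Icc 1 n
  disj : Disjoint evenN oddN
  start_mem : start ∈ Set.Icc 1 n
  edges_alph : ∀ e ∈ edges, InAlph n d e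
  total : ∀ v ∈ Set.Icc (1 : ℕ) n, ∃ e ∈ edges, e.1 = v

/-- A play in a game graph: an infinite path starting at the starting node,
identified with the word listing its consecutive edges. -/
def IsPlay {n d : ℕ} (G : GameGraph n d) (w : Word) : Prop :=
  (w 0).1 = G.start ∧ IsPathSeq G.edges w

/-- A positional strategy for Even: one outgoing edge for each node of `V_□`. -/
structure EPosStrat {n d : ℕ} (G : GameGraph n d) where
  choice : ℕ → Letter
  mem : ∀ v ∈ G.evenN, choice v ∈ G.edges ∧ (choice v).1 = v

/-- A positional strategy for Odd: one outgoing edge for each node of `V_△`. -/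
structure OPosStrat {n d : ℕ} (G : GameGraph n d) where
  choice : ℕ → Letter
  mem : ∀ v ∈ G.oddN, choice v ∈ G.edges ∧ (choice v).1 = v

/-- A play arises from a positional strategy of Even. -/
def ArisesE {n d : ℕ} {G : GameGraph n d} (τ : EPosStrat G) (w : Word) : Prop :=
  IsPlay G w ∧ ∀ k, (w k).1 ∈ G.evenN → w k = τ.choice (w k).1

/-- A play arises from a positional strategy of Odd. -/
def ArisesO {n d : ℕ} {G : GameGraph n d} (τ : OPosStrat G) (w : Word) : Prop :=
  IsPlay G w ∧ ∀ k, (w k).1 ∈ G.oddN → w k = τ.choice (w k).1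

/-- A positional strategy for Even is winning: every arising play is won by Even. -/
def EWinningPos {n d : ℕ} {G : GameGraph n d} (τ : EPosStrat G) : Prop :=
  ∀ w, ArisesE τ w → LimsupEven w

/-- A positional strategy for Odd is winning: every arising play is won by Odd
(i.e. not won by Even). -/
def OWinningPos {n d : ℕ} {G : GameGraph n d} (τ : OPosStrat G) : Prop :=
  ∀ w, ArisesO τ w → ¬ LimsupEven w

/-- `PosEven_{n,d}`: plays arising from positional winning strategies for Even. -/
def PosEven (n d : ℕ) : Set Word :=
  {w | ∃ G : GameGraph n d, ∃ τ : EPosStrat G, EWinningPos τ ∧ ArisesE τ w}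

/-- `PosOdd_{n,d}`: plays arising from positional winning strategies for Odd. -/
def PosOdd (n d : ℕ) : Set Word :=
  {w | ∃ G : GameGraph n d, ∃ τ : OPosStrat G, OWinningPos τ ∧ ArisesO τ w}

/-- A nondeterministic automaton reading letters, with state space `Q`. -/
structure Automaton (Q : Type*) where
  init : Q
  trans : Set (Q × Letter × ℕ × Q)

/-- Transitions: (source state, letter, emitted priority, target state). -/
abbrev Trans (Q : Type*) : Type _ := Q × Letter × ℕ × Q

def tSrc {Q : Type*} (t : Trans Q) : Q := t.1
def tLetter {Q : Type*} (t : Trans Q) : Letter := t.2.1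
def tPrio {Q : Type*} (t : Trans Q) : ℕ := t.2.2.1
def tTgt {Q : Type*} (t : Trans Q) : Q := t.2.2.2

/-- `A` is a (total) nondeterministic parity automaton over `Σ_{n,d}` with
transition priorities in `{1,…,d'}`. -/
def IsParityAutomaton (n d d' : ℕ) {Q : Type*} (A : Automaton Q) : Prop :=
  (∀ t ∈ A.trans, InAlph n d (tLetter t) ∧ 1 ≤ tPrio t ∧ tPrio t ≤ d') ∧
  (∀ (s : Q) (e : Letter), InAlph n d e → ∃ p s', (s, e, p, s') ∈ A.trans)

/-- A run of the automaton: an infinite path of transitions starting at `init`. -/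
def IsRun {Q : Type*} (A : Automaton Q) (ρ : ℕ → Trans Q) : Prop :=
  tSrc (ρ 0) = A.init ∧ ∀ k, ρ k ∈ A.trans ∧ tTgt (ρ k) = tSrc (ρ (k + 1))

/-- The run `ρ` reads the word `w`. -/
def Reads {Q : Type*} (ρ : ℕ → Trans Q) (w : Word) : Prop := ∀ k, tLetter (ρ k) = w k

/-- A run is accepting: the largest priority labelling infinitely many
of its transitions is even. -/
def Accepting {Q : Type*} (ρ : ℕ → Trans Q) : Prop := MaxInfOftEven fun k => tPrio (ρ k)

/-- The language of the automaton. -/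
def Lang {Q : Type*} (A : Automaton Q) : Set Word :=
  {w | ∃ ρ, IsRun A ρ ∧ Reads ρ w ∧ Accepting ρ}

/-- A transition strategy for `A`, resolving nondeterminism based on the word read
so far, the current state, and the next letter. -/
structure TransStrat (n d : ℕ) {Q : Type*} (A : Automaton Q) where
  app : List Letter → Q → Letter → Trans Q
  valid : ∀ w s e, InAlph n d e →
    app w s e ∈ A.trans ∧ tSrc (app w s e) = s ∧ tLetter (app w s e) = e

/-- The state reached after reading the first `k` letters of `w` following `σ`. -/
def stateAt {n d : ℕ} {Q : Type*} (A : Automaton Q) (σ : TransStrat n d A) (w : Word) :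
    ℕ → Q
  | 0 => A.init
  | k + 1 => tTgt (σ.app ((List.range k).map w) (stateAt A σ w k) (w k))

/-- The run obtained by following the transition strategy `σ` while reading `w`. -/
def followRun {n d : ℕ} {Q : Type*} (A : Automaton Q) (σ : TransStrat n d A) (w : Word)
    (k : ℕ) : Trans Q :=
  σ.app ((List.range k).map w) (stateAt A σ w k) (w k)

/-- The transition strategy `σ` is winning for the set of words `L`. -/
def WinningFor {n d : ℕ} {Q : Type*} (A : Automaton Q) (σ : TransStrat n d A)
    (L : Set Word) : Prop :=
  ∀ w ∈ L, Accepting (followRun A σ w)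

/-- `A` is good for games: some transition strategy is winning for the whole `L(A)`. -/
def GFG (n d : ℕ) {Q : Type*} (A : Automaton Q) : Prop :=
  ∃ σ : TransStrat n d A, WinningFor A σ (Lang A)

/-- `A` is a parity-games separator. -/
def PGSeparator (n d : ℕ) {Q : Type*} (A : Automaton Q) : Prop :=
  (∀ w ∈ PosEven n d, w ∈ Lang A) ∧ ∀ w ∈ PosOdd n d, w ∉ Lang A

/-- `A` is a strong PG separator: additionally it rejects all of `LimsupOdd`. -/
def StrongPGSeparator (n d : ℕ) {Q : Type*} (A : Automaton Q) : Prop :=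
  PGSeparator n d A ∧ ∀ w : Word, LimsupOdd w → w ∉ Lang A

/-- `A` is suitable for parity games (SFPG). -/
def SFPG (n d : ℕ) {Q : Type*} (A : Automaton Q) : Prop :=
  PGSeparator n d A ∧
  ∀ (G : GameGraph n d) (τ : EPosStrat G), EWinningPos τ →
    ∃ σ : TransStrat n d A, WinningFor A σ {w | ArisesE τ w}

/-- A generic game with parity winning condition, over an arbitrary set of nodes. -/
structure PGame (V : Type*) where
  evenOwn : V → Prop
  start : V
  edges : Set (V × ℕ × V)

/-- A play of a generic game. -/
def PGame.IsPlay {V : Type*} (g : PGame V) (w : ℕ → V × ℕ × V) : Prop :=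
  (w 0).1 = g.start ∧ IsPathSeq g.edges w

/-- `IsFinPath E u l v`: the list of edges `l` is a finite path from `u` to `v`. -/
def IsFinPath {V : Type*} (E : Set (V × ℕ × V)) : V → List (V × ℕ × V) → V → Prop
  | u, [], v => u = v
  | u, e :: l, v => e ∈ E ∧ e.1 = u ∧ IsFinPath E e.2.2 l v

/-- Even has a winning strategy in the game `g`. -/
def EvenWins {V : Type*} (g : PGame V) : Prop :=
  ∃ str : List (V × ℕ × V) → V × ℕ × V,
    (∀ l v, IsFinPath g.edges g.start l v → g.evenOwn v →
      str l ∈ g.edges ∧ (str l).1 = v) ∧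
    ∀ w, g.IsPlay w → (∀ k, g.evenOwn ((w k).1) → w k = str ((List.range k).map w)) →
      MaxInfOftEven fun k => (w k).2.1

/-- Odd has a winning strategy in the game `g`. -/
def OddWins {V : Type*} (g : PGame V) : Prop :=
  ∃ str : List (V × ℕ × V) → V × ℕ × V,
    (∀ l v, IsFinPath g.edges g.start l v → ¬ g.evenOwn v →
      str l ∈ g.edges ∧ (str l).1 = v) ∧
    ∀ w, g.IsPlay w → (∀ k, ¬ g.evenOwn ((w k).1) → w k = str ((List.range k).map w)) →
      ¬ MaxInfOftEven fun k => (w k).2.1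

/-- Even has a strategy winning for the safety condition `safe` in the game `g`. -/
def EvenWinsSafety {V : Type*} (g : PGame V) (safe : V → Prop) : Prop :=
  ∃ str : List (V × ℕ × V) → V × ℕ × V,
    (∀ l v, IsFinPath g.edges g.start l v → g.evenOwn v →
      str l ∈ g.edges ∧ (str l).1 = v) ∧
    ∀ w, g.IsPlay w → (∀ k, g.evenOwn ((w k).1) → w k = str ((List.range k).map w)) →
      ∀ k, safe (w k).2.2

/-- A game graph viewed as a generic game. -/
def GameGraph.toPGame {n d : ℕ} (G : GameGraph n d) : PGame ℕ :=
  { evenOwn := fun v => v ∈ G.evenN, start := G.start, edges := G.edges }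

/-- The synchronized product `G × A`. -/
def prodGame {n d : ℕ} {Q : Type*} (G : GameGraph n d) (A : Automaton Q) :
    PGame ((ℕ ⊕ Letter) × Q) where
  evenOwn := fun x => match x.1 with
    | Sum.inl v => v ∈ G.evenN
    | Sum.inr _ => True
  start := (Sum.inl G.start, A.init)
  edges := {ed | (∃ e ∈ G.edges, ∃ s : Q, ed = ((Sum.inl e.1, s), 1, (Sum.inr e, s))) ∨
    (∃ t ∈ A.trans, tLetter t ∈ G.edges ∧
      ed = ((Sum.inr (tLetter t), tSrc t), tPrio t, (Sum.inl (tLetter t).2.2, tTgt t)))}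

/-- The number of registers: `rn(n) = 1 + ⌊log₂ n⌋`. -/
def rn (n : ℕ) : ℕ := 1 + Nat.log 2 n

/-- Update of a register state (bottom register first) by priority `p`:
the maximal prefix of registers smaller than `p` is replaced by `p`. -/
def update (p : ℕ) : List ℕ → List ℕ
  | [] => []
  | r :: l => if r < p then p :: update p l else r :: l

/-- The `k`-reset (registers numbered from 1, bottom first): the `k`-th register is
removed and a `1` is inserted at the bottom. -/
def resetReg (k : ℕ) (l : List ℕ) : List ℕ := 1 :: l.eraseIdx (k - 1)

/-- The value of register number `k` (registers numbered from 1, bottom first). -/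
def regVal (k : ℕ) (l : List ℕ) : ℕ := l.getD (k - 1) 0

/-- Lehtinen's register automaton `R_{n,d}`. -/
def Raut (n d : ℕ) : Automaton (List ℕ) where
  init := List.replicate (rn n) 1
  trans := {t | ∃ s e, InAlph n d e ∧
    (t = (s, e, 1, update (prio e) s) ∨
     ∃ k, 1 ≤ k ∧ k ≤ rn n ∧
       ((Even (regVal k (update (prio e) s)) ∧
           t = (s, e, 2 * k, resetReg k (update (prio e) s))) ∨
        (Odd (regVal k (update (prio e) s)) ∧
           t = (s, e, 2 * k + 1, resetReg k (update (prio e) s)))))}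

/-- States of the safety automaton `S_{n,d}`: `none` is the rejecting state `rej`;
otherwise a state of `R_{n,d}` together with a tuple of counters (bottom first:
`c_0` is the head). -/
abbrev SState : Type := Option (List ℕ × List ℕ)

/-- Counters `c_0,…,c_{k-1}` are reset to `c0`; the rest is kept. -/
def bumpKeep (c0 k : ℕ) (c : List ℕ) : List ℕ := List.replicate k c0 ++ c.drop k

/-- Counters `c_0,…,c_{k-1}` are reset to `c0`; counter `c_k` is decremented. -/
def bumpDec (c0 k : ℕ) (c : List ℕ) : List ℕ :=
  List.replicate k c0 ++ ((c.getD k 0 - 1) :: c.drop (k + 1))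

/-- The safety automaton `S_{n,d}`. -/
def Saut (n d : ℕ) : Automaton SState where
  init := some (List.replicate (rn n) 1, List.replicate (rn n + 1) n)
  trans := {t |
    (∃ e, InAlph n d e ∧ t = (none, e, 1, none)) ∨
    (∃ s c e k s', 1 ≤ k ∧ (s, e, 2 * k, s') ∈ (Raut n d).trans ∧
       t = (some (s, c), e, 2, some (s', bumpKeep n k c))) ∨
    (∃ s c e k s', (s, e, 2 * k + 1, s') ∈ (Raut n d).trans ∧
       ((1 < c.getD k 0 ∧ t = (some (s, c), e, 2, some (s', bumpDec n k c))) ∨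
        (c.getD k 0 = 1 ∧ t = (some (s, c), e, 1, none))))}

/-- `bad(ρ) ≤ B` for an infinite run `ρ`: every infix containing no transition of
priority above an odd `p` contains at most `B` transitions of priority `p`. -/
def badLE {Q : Type*} (ρ : ℕ → Trans Q) (B : ℕ) : Prop :=
  ∀ a b p, Odd p → (∀ i, a ≤ i → i < b → tPrio (ρ i) ≤ p) →
    ((Finset.Ico a b).filter fun i => tPrio (ρ i) = p).card ≤ B

/-- `bad(ρ) ≤ B` for a partial run of length `L` (possibly infinite). -/
def badLEPartial {Q : Type*} (ρ : ℕ → Trans Q) (L : ℕ∞) (B : ℕ) : Prop :=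
  ∀ (a b p : ℕ), Odd p → (b : ℕ∞) ≤ L → (∀ i, a ≤ i → i < b → tPrio (ρ i) ≤ p) →
    ((Finset.Ico a b).filter fun i => tPrio (ρ i) = p).card ≤ B

/-- The strategy subgraph `G_τ`: all outgoing edges of Odd's nodes, and only the
chosen edge from each of Even's nodes. -/
def GtauEdges {n d : ℕ} (G : GameGraph n d) (τ : EPosStrat G) : Set Letter :=
  {e | e ∈ G.edges ∧ (e.1 ∈ G.evenN → e = τ.choice e.1)}

/-- One step along an edge of `E`. -/
def StepRel (E : Set Letter) (u v : ℕ) : Prop := ∃ p, (u, p, v) ∈ E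

/-- Reachability along edges of `E`. -/
def Reach (E : Set Letter) : ℕ → ℕ → Prop := Relation.ReflTransGen (StepRel E)

/-- `V_τ`: the nodes of `G_τ` reachable from the starting node. -/
def Vtau {n d : ℕ} (G : GameGraph n d) (τ : EPosStrat G) : Set ℕ :=
  {v | Reach (GtauEdges G τ) G.start v}

/-- `G_{S,p}`: edges of `E` inside `S` of priority at most `p`. -/
def subEdges (E : Set Letter) (S : Set ℕ) (p : ℕ) : Set Letter :=
  {e | e ∈ E ∧ e.1 ∈ S ∧ e.2.2 ∈ S ∧ prio e ≤ p}

/-- `parts` lists the strongly connected components of the graph `(S, E)` in a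
topological order. -/
def IsSCCDecomp (E : Set Letter) (S : Set ℕ) (parts : List (Set ℕ)) : Prop :=
  (∀ P ∈ parts, P.Nonempty ∧ P ⊆ S) ∧
  (∀ v ∈ S, ∃ P ∈ parts, v ∈ P) ∧
  List.Pairwise Disjoint parts ∧
  (∀ P ∈ parts, ∀ u ∈ P, ∀ v ∈ S, ((Reach E u v ∧ Reach E v u) ↔ v ∈ P)) ∧
  (∀ (i j : ℕ) (hi : i < parts.length) (hj : j < parts.length), i < j →
    ∀ u ∈ parts.get ⟨j, hj⟩, ∀ v ∈ parts.get ⟨i, hi⟩, ¬ StepRel E u v)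

/-- The nodes of a tree given by the children function `ch` with root `(r, R)`. -/
inductive TreeNode (ch : ℕ → Set ℕ → List (Set ℕ)) (r : ℕ) (R : Set ℕ) :
    ℕ → Set ℕ → Prop where
  | root : TreeNode ch r R r R
  | child {k : ℕ} {S T : Set ℕ} : TreeNode ch r R (k + 1) S → T ∈ ch (k + 1) S →
      TreeNode ch r R k T

/-- `ch` describes a game tree of `G_τ`: the root is `(⌈d/2⌉, V_τ)`, and the children
of a node `(k+1, S)` are the SCCs of `G_{S,2(k+1)-1}` in topological order. -/
def IsGameTree {n d : ℕ} (G : GameGraph n d) (τ : EPosStrat G)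
    (ch : ℕ → Set ℕ → List (Set ℕ)) : Prop :=
  ∀ k S, TreeNode ch ((d + 1) / 2) (Vtau G τ) (k + 1) S →
    IsSCCDecomp (subEdges (GtauEdges G τ) S (2 * (k + 1) - 1)) S (ch (k + 1) S)

/-- `fstl ch l k S`: the leftmost descendant of the node `(k, S)` on level `l`
(for `l ≤ k`). -/
def fstl (ch : ℕ → Set ℕ → List (Set ℕ)) (l : ℕ) : ℕ → Set ℕ → Set ℕ
  | 0, S => S
  | k + 1, S => if l = k + 1 then S else fstl ch l k ((ch (k + 1) S).headD ∅)

section Aux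

variable {Q : Type}

/-- Last node of a finite path: start if empty, else target of last edge. -/
def lastNode {V : Type*} (u : V) (l : List (V × ℕ × V)) : V :=
  l.getLast?.elim u (·.2.2)

lemma isFinPath_lastNode {V : Type*} (E : Set (V × ℕ × V)) :
    ∀ (l : List (V × ℕ × V)) (u v : V), IsFinPath E u l v → v = lastNode u l := by
  intro l
  induction l with
  | nil => intro u v h; exact h.symm
  | cons e l ih =>
    intro u v h
    obtain ⟨he, he1, hp⟩ := h
    cases l with
    | nil => simpa [lastNode] using hp.symm
    | cons e' l' =>
      have := ih e.2.2 v hp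
      simpa [lastNode, List.getLast?_cons_cons,
        List.getLast?_eq_getLast (l := e' :: l') (List.cons_ne_nil _ _)] using this

lemma isFinPath_last_mem {V : Type*} (E : Set (V × ℕ × V)) :
    ∀ (l : List (V × ℕ × V)) (u v : V), IsFinPath E u l v →
      (l = [] ∧ u = v) ∨ ∃ ed, l.getLast? = some ed ∧ ed ∈ E ∧ ed.2.2 = v := by
  intro l
  induction l with
  | nil => intro u v h; exact Or.inl ⟨rfl, h⟩
  | cons e l ih =>
    intro u v h
    obtain ⟨he, he1, hp⟩ := h
    rcases ih e.2.2 v hp with ⟨hl, hv⟩ | ⟨ed, hed, hmem, htg⟩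
    · subst hl
      exact Or.inr ⟨e, rfl, he, hv⟩
    · cases l with
      | nil => simp at hed
      | cons e' l' =>
        exact Or.inr ⟨ed, by simpa [List.getLast?_cons_cons] using hed, hmem, htg⟩

/-- Extract the word read so far from a product-game history. -/
def wordOf (l : List (((ℕ ⊕ Letter) × Q) × ℕ × ((ℕ ⊕ Letter) × Q))) : List Letter :=
  l.filterMap fun ed => match ed.1.1 with
    | Sum.inr e => some e
    | Sum.inl _ => none

/-- Even's strategy in the product game, from a node `x`. -/
def strAux {n d : ℕ} (G : GameGraph n d) (A : Automaton Q) (τ : EPosStrat G)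
    (σ : TransStrat n d A) (l : List (((ℕ ⊕ Letter) × Q) × ℕ × ((ℕ ⊕ Letter) × Q)))
    (x : (ℕ ⊕ Letter) × Q) : ((ℕ ⊕ Letter) × Q) × ℕ × ((ℕ ⊕ Letter) × Q) :=
  match x with
  | (Sum.inl v, s) => ((Sum.inl v, s), 1, (Sum.inr (τ.choice v), s))
  | (Sum.inr e, s) =>
      ((Sum.inr e, s), tPrio (σ.app (wordOf l) s e),
        (Sum.inl e.2.2, tTgt (σ.app (wordOf l) s e)))

def prodStrat {n d : ℕ} (G : GameGraph n d) (A : Automaton Q) (τ : EPosStrat G)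
    (σ : TransStrat n d A) (l : List (((ℕ ⊕ Letter) × Q) × ℕ × ((ℕ ⊕ Letter) × Q))) :
    ((ℕ ⊕ Letter) × Q) × ℕ × ((ℕ ⊕ Letter) × Q) :=
  strAux G A τ σ l (lastNode (prodGame G A).start l)

end Aux

/-- If `τ` is a positional winning strategy for Even in `G` and the
automaton `A` has a transition strategy `σ` winning for the plays of `G` arising
from `τ`, then Even has a winning strategy in the synchronized product `G × A`. -/
theorem transition_strategy_even_wins_product (n d : ℕ) (hn : 1 ≤ n) (hd : 1 ≤ d)
    (G : GameGraph n d) {Q : Type} [Finite Q] (A : Automaton Q) (d' : ℕ)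
    (hA : IsParityAutomaton n d d' A) (τ : EPosStrat G) (hτ : EWinningPos τ)
    (σ : TransStrat n d A) (hσ : WinningFor A σ {w | ArisesE τ w}) :
    EvenWins (prodGame G A) := by
  refine ⟨prodStrat G A τ σ, ?_, ?_⟩
  · -- validity
    intro l v hpath hown
    have hlast := isFinPath_lastNode _ l _ v hpath
    obtain ⟨x, s⟩ := v
    cases x with
    | inl vn =>
      have hvn : vn ∈ G.evenN := hown
      obtain ⟨hc, hc1⟩ := τ.mem vn hvn
      have hstr : prodStrat G A τ σ l =
          ((Sum.inl vn, s), 1, (Sum.inr (τ.choice vn), s)) := by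
        rw [prodStrat, ← hlast]; rfl
      rw [hstr]
      constructor
      · exact Or.inl ⟨τ.choice vn, hc, s, by rw [hc1]⟩
      · rfl
    | inr e =>
      -- e ∈ G.edges from the last edge of the path
      have hE : e ∈ G.edges := by
        rcases isFinPath_last_mem _ l _ _ hpath with ⟨hl, hv⟩ | ⟨ed, hed, hmem, htg⟩
        · exfalso
          have : (prodGame G A).start = (Sum.inr e, s) := hv
          simp [prodGame] at this
        · rcases hmem with ⟨e', he', s', hform⟩ | ⟨t, ht, htE, hform⟩
          · rw [hform] at htg
            simp only [Prod.mk.injEq] at htg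
            obtain ⟨h1, -⟩ := htg
            obtain rfl : e' = e := by injection h1
            exact he'
          · rw [hform] at htg
            simp only [Prod.mk.injEq] at htg
            exact absurd htg.1 (by simp)
      have hal : InAlph n d e := G.edges_alph e hE
      obtain ⟨htr, hsrc, hlet⟩ := σ.valid (wordOf l) s e hal
      have hstr : prodStrat G A τ σ l =
          ((Sum.inr e, s), tPrio (σ.app (wordOf l) s e),
            (Sum.inl e.2.2, tTgt (σ.app (wordOf l) s e))) := by
        rw [prodStrat, ← hlast]; rfl
      rw [hstr]
      refine ⟨Or.inr ⟨σ.app (wordOf l) s e, htr, ?_, ?_⟩, rfl⟩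
      · rw [hlet]; exact hE
      · rw [hlet, hsrc]
  · -- winning
    intro w hplay hcons
    obtain ⟨hstart, hpathseq⟩ := hplay
    -- every even position is at an `inl` node
    have hinl : ∀ k, ∃ v s, (w (2*k)).1 = (Sum.inl v, s) := by
      intro k
      induction k with
      | zero =>
        refine ⟨G.start, A.init, ?_⟩
        simpa [prodGame] using hstart
      | succ k ih =>
        obtain ⟨v, s, hvs⟩ := ih
        rcases (hpathseq (2*k)).1 with ⟨e, he, s', hform⟩ | ⟨t, ht, htE, hform⟩
        · have h1 : (w (2*k+1)).1 = (Sum.inr e, s') := by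
            rw [← (hpathseq (2*k)).2, hform]
          rcases (hpathseq (2*k+1)).1 with ⟨e', he', s'', hform'⟩ | ⟨t, ht, htE, hform'⟩
          · rw [hform'] at h1; simp at h1
          · refine ⟨(tLetter t).2.2, tTgt t, ?_⟩
            have h2 : (2:ℕ)*(k+1) = (2*k+1)+1 := by ring
            rw [h2, ← (hpathseq (2*k+1)).2, hform']
        · rw [hform] at hvs; simp at hvs
    -- full shape of the play
    have h1 : ∀ k, ∃ e s t, e ∈ G.edges ∧ t ∈ A.trans ∧ tLetter t = e ∧ tSrc t = s ∧
        w (2*k) = ((Sum.inl e.1, s), 1, (Sum.inr e, s)) ∧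
        w (2*k+1) = ((Sum.inr e, s), tPrio t, (Sum.inl e.2.2, tTgt t)) := by
      intro k
      obtain ⟨v, s, hvs⟩ := hinl k
      rcases (hpathseq (2*k)).1 with ⟨e, he, s', hform⟩ | ⟨t, ht, htE, hform⟩
      · have h1 : (w (2*k+1)).1 = (Sum.inr e, s') := by
          rw [← (hpathseq (2*k)).2, hform]
        rcases (hpathseq (2*k+1)).1 with ⟨e', he', s'', hform'⟩ | ⟨t, ht, htE, hform'⟩
        · rw [hform'] at h1; simp at h1
        · rw [hform'] at h1
          simp only [Prod.mk.injEq] at h1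
          obtain ⟨hl, hs⟩ := h1
          have hl' : tLetter t = e := by injection hl
          refine ⟨e, s', t, he, ht, hl', hs, hform, ?_⟩
          rw [hform', hl', hs]
      · rw [hform] at hvs; simp at hvs
    choose u sq t hE htA hlet hsrc hw0 hw1 using h1
    -- basic equations
    have hu0 : (u 0).1 = G.start ∧ sq 0 = A.init := by
      have h0 := hw0 0
      norm_num at h0
      rw [h0] at hstart
      simp only [prodGame, Prod.mk.injEq] at hstart
      exact ⟨by injection hstart.1, hstart.2⟩
    have hstep : ∀ k, (u k).2.2 = (u (k+1)).1 ∧ tTgt (t k) = sq (k+1) := by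
      intro k
      have h2 : (2:ℕ)*(k+1) = (2*k+1)+1 := by ring
      have := (hpathseq (2*k+1)).2
      rw [hw1 k, ← h2, hw0 (k+1)] at this
      simp only [Prod.mk.injEq] at this
      exact ⟨by injection this.1, this.2⟩
    -- end of history = current node
    have hend : ∀ k, lastNode (prodGame G A).start ((List.range k).map w) = (w k).1 := by
      intro k
      cases k with
      | zero => simp [lastNode]; exact hstart.symm
      | succ k =>
        rw [List.range_succ, List.map_append]
        simp only [List.map_cons, List.map_nil, lastNode, List.getLast?_concat]
        exact (hpathseq k).2
    -- the word extracted from histories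
    have hword : ∀ k, wordOf ((List.range (2*k+1)).map w) = (List.range k).map u := by
      intro k
      induction k with
      | zero =>
        have h0 := hw0 0
        norm_num at h0
        simp [wordOf, List.range_succ, h0]
      | succ k ih =>
        have h2 : (2:ℕ)*(k+1)+1 = ((2*k+1)+1)+1 := by ring
        have h3 : (2:ℕ)*(k+1) = (2*k+1)+1 := by ring
        rw [h2, List.range_succ, List.range_succ, List.map_append, List.map_append]
        simp only [wordOf, List.filterMap_append] at ih ⊢
        rw [ih, ← h3, List.range_succ, List.map_append]
        simp [hw1 k, hw0 (k+1)]
    -- strategy consistency at odd positions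
    have hodd : ∀ k,
        tPrio (t k) = tPrio (σ.app ((List.range k).map u) (sq k) (u k)) ∧
        tTgt (t k) = tTgt (σ.app ((List.range k).map u) (sq k) (u k)) := by
      intro k
      have hown : (prodGame G A).evenOwn ((w (2*k+1)).1) := by
        rw [hw1 k]; trivial
      have hc := hcons (2*k+1) hown
      rw [prodStrat, hend (2*k+1), hw1 k] at hc
      simp only [strAux, hword k] at hc
      simp only [Prod.mk.injEq] at hc
      exact ⟨hc.2.1, hc.2.2.2⟩
    -- states follow σ
    have hsq : ∀ k, sq k = stateAt A σ u k := by
      intro k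
      induction k with
      | zero => rw [hu0.2]; rfl
      | succ k ih =>
        rw [← (hstep k).2, (hodd k).2, ih]
        rfl
    have hfp : ∀ k, tPrio (followRun A σ u k) = tPrio (t k) := by
      intro k
      rw [(hodd k).1, hsq k]
      rfl
    -- u arises from τ
    have harise : ArisesE τ u := by
      refine ⟨⟨hu0.1, fun k => ⟨hE k, (hstep k).1⟩⟩, ?_⟩
      intro k hk
      have hown : (prodGame G A).evenOwn ((w (2*k)).1) := by
        rw [hw0 k]; exact hk
      have hc := hcons (2*k) hown
      rw [prodStrat, hend (2*k), hw0 k] at hc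
      simp only [strAux, Prod.mk.injEq] at hc
      have := hc.2.2.1
      injection this
    have hacc := hσ u harise
    obtain ⟨P, hPe, hPio, hPmax⟩ := hacc
    -- priorities of the t's are at least 1
    have hge1 : ∀ k, 1 ≤ tPrio (t k) := fun k => (hA.1 (t k) (htA k)).2.1
    have hP1 : 1 ≤ P := by
      obtain ⟨k, -, hk⟩ := hPio 0
      have hk' : tPrio (followRun A σ u k) = P := hk
      rw [← hk', hfp k]
      exact hge1 k
    refine ⟨P, hPe, ?_, ?_⟩
    · intro N
      obtain ⟨k, hk, hkP⟩ := hPio N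
      refine ⟨2*k+1, by omega, ?_⟩
      show (w (2*k+1)).2.1 = P
      rw [hw1 k]
      show tPrio (t k) = P
      rw [← hfp k]; exact hkP
    · intro q hq
      by_cases hq1 : q = 1
      · omega
      · refine hPmax q ?_
        intro N
        obtain ⟨m, hm, hmq⟩ := hq (2*N+1)
        rcases Nat.even_or_odd m with ⟨k, hk⟩ | ⟨k, hk⟩
        · exfalso
          have hk' : m = 2*k := by omega
          subst hk'
          have hmq' : (w (2*k)).2.1 = q := hmq
          rw [hw0 k] at hmq'
          exact hq1 hmq'.symm
        · subst hk
          refine ⟨k, by omega, ?_⟩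
          have hmq' : (w (2*k+1)).2.1 = q := hmq
          rw [hw1 k] at hmq'
          show tPrio (followRun A σ u k) = q
          rw [hfp k]; exact hmq'

end PGSep
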